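/- arXiv:0906.2279 — 2 statements merged into one kernel-verified Lean document; each statement's English description precedes it below -/
import Mathlib

section
/- For α > -1 and nonnegative integer n, the inverse of the Hankel matrix ((α+1)_{j+k})_{0≤j,k≤n} has (j,k)-entry γ_{j,k} = Σ_{ℓ=0}^{n} (α+1)_ℓ (-ℓ)_j (-ℓ)_k / (ℓ! (α+1)_j (α+1)_k j! k!). -/
/-- The shifted factorial (Pochhammer symbol) (x)ₙ = x(x+1)⋯(x+n-1). -/
noncomputable def poch (x : ℝ) (n : ℕ) : ℝ := ∏ i ∈ Finset.range n, (x + i)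

lemma poch_zero (x : ℝ) : poch x 0 = 1 := by simp [poch]

lemma poch_succ (x : ℝ) (n : ℕ) : poch x (n+1) = poch x n * (x + n) :=
  Finset.prod_range_succ _ _

lemma poch_succ_left (x : ℝ) (n : ℕ) : poch x (n+1) = x * poch (x+1) n := by
  unfold poch
  rw [Finset.prod_range_succ']
  simp only [Nat.cast_add, Nat.cast_one, Nat.cast_zero, add_zero]
  rw [mul_comm]
  congr 1
  apply Finset.prod_congr rfl
  intro i _
  ring

lemma poch_add (x : ℝ) (a b : ℕ) : poch x (a+b) = poch x a * poch (x+a) b := by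
  induction b with
  | zero => simp [poch_zero]
  | succ b ih =>
    rw [show a + (b+1) = (a+b)+1 by ring, poch_succ, ih, poch_succ]
    push_cast
    ring

lemma poch_pos {c : ℝ} (hc : 0 < c) (n : ℕ) : 0 < poch c n := by
  apply Finset.prod_pos
  intro i _
  positivity

lemma poch_ne_zero {c : ℝ} (hc : 0 < c) (n : ℕ) : poch c n ≠ 0 :=
  (poch_pos hc n).ne'

lemma poch_neg_nat_zero {l k : ℕ} (h : l < k) : poch (-(l:ℝ)) k = 0 := by
  apply Finset.prod_eq_zero (Finset.mem_range.mpr h)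
  simp

lemma poch_neg_nat {N m : ℕ} (h : m ≤ N) :
    poch (-(N:ℝ)) m = (-1)^m * (N.descFactorial m : ℝ) := by
  rw [Nat.descFactorial_eq_prod_range, Nat.cast_prod]
  unfold poch
  rw [show ((-1:ℝ))^m = ∏ _i ∈ Finset.range m, (-1:ℝ) by simp, ← Finset.prod_mul_distrib]
  apply Finset.prod_congr rfl
  intro i hi
  have hi' : i < m := Finset.mem_range.mp hi
  have : i ≤ N := le_trans (le_of_lt hi') h
  rw [Nat.cast_sub this]
  ring

lemma poch_pred (x : ℝ) (j : ℕ) :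
    poch (x - 1) j = poch x j - j * poch x (j - 1) := by
  cases j with
  | zero => simp [poch_zero]
  | succ m =>
    rw [poch_succ_left, poch_succ]
    simp only [Nat.add_sub_cancel]
    have : x - 1 + 1 = x := by ring
    rw [this]
    push_cast
    ring

lemma CV (l : ℕ) : ∀ b c : ℝ, 0 < c →
    (∑ j ∈ Finset.range (l+1),
      poch (-(l:ℝ)) j * poch b j / (poch c j * (Nat.factorial j : ℝ)))
      = poch (c - b) l / poch c l := by
  induction l with
  | zero => intro b c hc; simp [poch_zero]
  | succ l ih =>
    intro b c hc
    have hc1 : (0:ℝ) < c + 1 := by linarith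
    have key : ∀ j ∈ Finset.range (l+2),
        poch (-((l+1:ℕ):ℝ)) j * poch b j / (poch c j * (Nat.factorial j : ℝ))
        = poch (-(l:ℝ)) j * poch b j / (poch c j * (Nat.factorial j : ℝ))
          - (j : ℝ) * poch (-(l:ℝ)) (j-1) * poch b j / (poch c j * (Nat.factorial j : ℝ)) := by
      intro j _
      have : (-((l+1:ℕ):ℝ)) = (-(l:ℝ)) - 1 := by push_cast; ring
      rw [this, poch_pred]
      ring
    rw [Finset.sum_congr rfl key, Finset.sum_sub_distrib]
    -- first sum: extend/truncate to range (l+1)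
    have h1 : ∑ j ∈ Finset.range (l+2),
        poch (-(l:ℝ)) j * poch b j / (poch c j * (Nat.factorial j : ℝ))
        = poch (c - b) l / poch c l := by
      rw [Finset.sum_range_succ, poch_neg_nat_zero (Nat.lt_succ_self l)]
      simp only [zero_mul, zero_div, add_zero]
      exact ih b c hc
    -- second sum: reindex
    have h2 : ∑ j ∈ Finset.range (l+2),
        (j : ℝ) * poch (-(l:ℝ)) (j-1) * poch b j / (poch c j * (Nat.factorial j : ℝ))
        = (b / c) * (poch (c + 1 - (b+1)) l / poch (c+1) l) := by
      rw [Finset.sum_range_succ']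
      simp only [Nat.cast_zero, zero_mul, zero_div, add_zero, Nat.add_sub_cancel]
      rw [← ih (b+1) (c+1) hc1, Finset.mul_sum]
      apply Finset.sum_congr rfl
      intro j _
      rw [poch_succ_left b j, poch_succ_left c j, Nat.factorial_succ]
      have hcj := poch_ne_zero hc1 j
      have hfj : ((Nat.factorial j : ℝ)) ≠ 0 := by positivity
      have hc' : c ≠ 0 := ne_of_gt hc
      field_simp
      push_cast; ring
    rw [h1, h2]
    have hrel : poch c l * (c + l) = c * poch (c+1) l := by
      rw [← poch_succ, poch_succ_left]
    have e1 : c + 1 - (b + 1) = c - b := by ring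
    rw [e1, poch_succ (c-b) l]
    have hpc := poch_ne_zero hc l
    have hpc1 := poch_ne_zero hc1 l
    have hc' : c ≠ 0 := ne_of_gt hc
    have hpcs : poch c (l+1) ≠ 0 := poch_ne_zero hc (l+1)
    rw [poch_succ c l]
    have hcl : c + (l:ℝ) ≠ 0 := by positivity
    have hQ : poch (c+1) l = poch c l * (c + l) / c := by
      field_simp; linarith [hrel]
    rw [hQ]
    field_simp
    ring

lemma CV_ext {l n : ℕ} (hl : l ≤ n) (b c : ℝ) (hc : 0 < c) :
    (∑ j ∈ Finset.range (n+1),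
      poch (-(l:ℝ)) j * poch b j / (poch c j * (Nat.factorial j : ℝ)))
      = poch (c - b) l / poch c l := by
  rw [← CV l b c hc]
  symm
  apply Finset.sum_subset
  · exact Finset.range_subset_range.mpr (by omega)
  · intro j _ hj
    have : l < j := by
      rcases Nat.lt_or_ge l j with h | h
      · exact h
      · exact absurd (Finset.mem_range.mpr (by omega)) hj
    rw [poch_neg_nat_zero this, zero_mul, zero_div]

lemma alt0 (N : ℕ) :
    ∑ m ∈ Finset.range (N+1), poch (-(N:ℝ)) m / (Nat.factorial m : ℝ)
      = if N = 0 then 1 else 0 := by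
  have : ∀ m ∈ Finset.range (N+1),
      poch (-(N:ℝ)) m / (Nat.factorial m : ℝ) = (-1)^m * (N.choose m : ℝ) := by
    intro m hm
    have hm' : m ≤ N := Nat.lt_succ_iff.mp (Finset.mem_range.mp hm)
    rw [poch_neg_nat hm', Nat.descFactorial_eq_factorial_mul_choose]
    have : ((Nat.factorial m : ℝ)) ≠ 0 := by positivity
    push_cast
    field_simp
  rw [Finset.sum_congr rfl this]
  have := @Int.alternating_sum_range_choose N
  calc ∑ m ∈ Finset.range (N+1), ((-1:ℝ))^m * (N.choose m : ℝ)
      = ((∑ m ∈ Finset.range (N+1), (-1:ℤ)^m * (N.choose m : ℤ) : ℤ) : ℝ) := by push_cast; ring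
    _ = if N = 0 then 1 else 0 := by rw [this]; split <;> simp

lemma alt_sum {i k n : ℕ} (hi : i ≤ n) :
    ∑ l ∈ Finset.range (n+1),
      poch (-(i:ℝ)) l * poch (-(l:ℝ)) k / (Nat.factorial l : ℝ)
      = if i = k then (Nat.factorial k : ℝ) else 0 := by
  rcases Nat.lt_or_ge i k with hik | hik
  · rw [if_neg (by omega)]
    apply Finset.sum_eq_zero
    intro l _
    rcases Nat.lt_or_ge l k with hl | hl
    · rw [poch_neg_nat_zero hl]; simp
    · rw [poch_neg_nat_zero (by omega : i < l)]; simp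
  · have hsub : Finset.Ico k (i+1) ⊆ Finset.range (n+1) := by
      intro x hx
      simp only [Finset.mem_Ico] at hx
      exact Finset.mem_range.mpr (by omega)
    have hstep : ∑ l ∈ Finset.range (n+1),
        poch (-(i:ℝ)) l * poch (-(l:ℝ)) k / (Nat.factorial l : ℝ)
        = ∑ l ∈ Finset.Ico k (i+1),
        poch (-(i:ℝ)) l * poch (-(l:ℝ)) k / (Nat.factorial l : ℝ) := by
      symm
      apply Finset.sum_subset hsub
      intro l _ hl
      simp only [Finset.mem_Ico, not_and, not_lt] at hl
      rcases Nat.lt_or_ge l k with h | h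
      · rw [poch_neg_nat_zero h]; simp
      · rw [poch_neg_nat_zero (by have := hl h; omega : i < l)]; simp
    rw [hstep, Finset.sum_Ico_eq_sum_range]
    have hrange : i + 1 - k = (i - k) + 1 := by omega
    have hterm : ∀ m, poch (-(i:ℝ)) (k+m) * poch (-((k+m:ℕ):ℝ)) k / (Nat.factorial (k+m) : ℝ)
        = (-1:ℝ)^k * poch (-(i:ℝ)) k * (poch (-((i-k:ℕ):ℝ)) m / (Nat.factorial m : ℝ)) := by
      intro m
      rw [poch_add, poch_neg_nat (by omega : k ≤ k + m)]
      have hcast : -(i:ℝ) + k = -(((i-k:ℕ)):ℝ) := by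
        rw [Nat.cast_sub hik]; ring
      rw [hcast]
      have h1 := Nat.factorial_mul_descFactorial (Nat.le_add_right k m)
      rw [Nat.add_sub_cancel_left] at h1
      have hDF : ((Nat.factorial m : ℝ)) * ((k+m).descFactorial k : ℝ)
          = (Nat.factorial (k+m) : ℝ) := by exact_mod_cast congrArg (fun t : ℕ => (t : ℝ)) h1
      have hF : ((Nat.factorial (k+m) : ℝ)) ≠ 0 := by positivity
      have hm : ((Nat.factorial m : ℝ)) ≠ 0 := by positivity
      rw [mul_div_assoc', div_eq_div_iff hF hm]
      linear_combination (poch (-(i:ℝ)) k * poch (-((i-k:ℕ)):ℝ) m * (-1:ℝ)^k) * hDF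
    simp only [hterm]
    rw [← Finset.mul_sum, hrange, alt0 (i-k)]
    rcases Nat.eq_or_lt_of_le hik with he | hlt
    · rw [if_pos (by omega), if_pos he.symm]
      subst he
      rw [poch_neg_nat (le_refl k), Nat.descFactorial_self]
      have hsq : ((-1:ℝ))^k * (-1)^k = 1 := by
        rw [← pow_add, ← two_mul, pow_mul]; norm_num
      linear_combination (k.factorial : ℝ) * hsq
    · rw [if_neg (by omega), if_neg (by omega)]
      ring

/-- The inverse of the Hankel matrix ((α+1)_{j+k})_{0≤j,k≤n} has entries
γ_{j,k} = Σ_{ℓ=0}^{n} (α+1)_ℓ (-ℓ)_j (-ℓ)_k / (ℓ! (α+1)_j (α+1)_k j! k!). -/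
theorem stmt_2 (α : ℝ) (hα : -1 < α) (n : ℕ) :
    (Matrix.of fun j k : Fin (n+1) => poch (α+1) (j.1 + k.1))⁻¹ =
      Matrix.of fun j k : Fin (n+1) =>
        ∑ ℓ ∈ Finset.range (n+1),
          poch (α+1) ℓ * poch (-(ℓ:ℝ)) j.1 * poch (-(ℓ:ℝ)) k.1 /
            ((Nat.factorial ℓ : ℝ) * poch (α+1) j.1 * poch (α+1) k.1 *
              (Nat.factorial j.1) * (Nat.factorial k.1)) := by
  have hc : (0:ℝ) < α + 1 := by linarith
  apply Matrix.inv_eq_right_inv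
  ext i k
  rw [Matrix.mul_apply, Matrix.one_apply]
  simp only [Matrix.of_apply]
  set c := α + 1 with hc_def
  set I := i.1 with hI
  set K := k.1 with hK
  have hIn : I ≤ n := Nat.lt_succ_iff.mp i.isLt
  have hKn : K ≤ n := Nat.lt_succ_iff.mp k.isLt
  have hpK := poch_ne_zero hc K
  have hfK : ((Nat.factorial K : ℝ)) ≠ 0 := by positivity
  have step1 : ∑ j : Fin (n+1), poch c (I + j.1) *
      (∑ l ∈ Finset.range (n+1),
        poch c l * poch (-(l:ℝ)) j.1 * poch (-(l:ℝ)) K /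
          ((Nat.factorial l : ℝ) * poch c j.1 * poch c K *
            (Nat.factorial j.1) * (Nat.factorial K)))
      = ∑ j ∈ Finset.range (n+1), poch c (I + j) *
      (∑ l ∈ Finset.range (n+1),
        poch c l * poch (-(l:ℝ)) j * poch (-(l:ℝ)) K /
          ((Nat.factorial l : ℝ) * poch c j * poch c K *
            (Nat.factorial j) * (Nat.factorial K))) :=
    Fin.sum_univ_eq_sum_range (fun j => poch c (I + j) *
      (∑ l ∈ Finset.range (n+1),
        poch c l * poch (-(l:ℝ)) j * poch (-(l:ℝ)) K /
          ((Nat.factorial l : ℝ) * poch c j * poch c K *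
            (Nat.factorial j) * (Nat.factorial K)))) (n+1)
  rw [step1]
  have step2 : ∀ j ∈ Finset.range (n+1), poch c (I + j) *
      (∑ l ∈ Finset.range (n+1),
        poch c l * poch (-(l:ℝ)) j * poch (-(l:ℝ)) K /
          ((Nat.factorial l : ℝ) * poch c j * poch c K *
            (Nat.factorial j) * (Nat.factorial K)))
      = ∑ l ∈ Finset.range (n+1),
          (poch c I * poch c l * poch (-(l:ℝ)) K /
            ((Nat.factorial l : ℝ) * poch c K * (Nat.factorial K))) *
          (poch (-(l:ℝ)) j * poch (c + I) j / (poch c j * (Nat.factorial j : ℝ))) := by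
    intro j _
    rw [Finset.mul_sum]
    apply Finset.sum_congr rfl
    intro l _
    rw [poch_add c I j]
    ring
  rw [Finset.sum_congr rfl step2, Finset.sum_comm]
  have step3 : ∀ l ∈ Finset.range (n+1),
      ∑ j ∈ Finset.range (n+1),
          (poch c I * poch c l * poch (-(l:ℝ)) K /
            ((Nat.factorial l : ℝ) * poch c K * (Nat.factorial K))) *
          (poch (-(l:ℝ)) j * poch (c + I) j / (poch c j * (Nat.factorial j : ℝ)))
      = (poch c I / (poch c K * (Nat.factorial K : ℝ))) *
          (poch (-(I:ℝ)) l * poch (-(l:ℝ)) K / (Nat.factorial l : ℝ)) := by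
    intro l hl
    have hln : l ≤ n := Nat.lt_succ_iff.mp (Finset.mem_range.mp hl)
    rw [← Finset.mul_sum, CV_ext hln (c + I) c hc]
    have : c - (c + (I:ℝ)) = -(I:ℝ) := by ring
    rw [this]
    have hpl := poch_ne_zero hc l
    have hfl : ((Nat.factorial l : ℝ)) ≠ 0 := by positivity
    field_simp
  rw [Finset.sum_congr rfl step3, ← Finset.mul_sum, alt_sum hIn]
  by_cases hik : i = k
  · rw [if_pos hik]
    have : I = K := by rw [hI, hK, hik]
    rw [if_pos this, this]
    field_simp
  · rw [if_neg hik, if_neg (by simpa [hI, hK, Fin.val_eq_val] using hik)]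
    ring
end

section
/- For 0 < q < 1, Σ_{m=0}^{∞} q^{m(m-1)} b^m / ((q;q)_m (b;q)_m) = 1/(b;q)_∞ with b = q^{α+1} (α > -1); equivalently, ( Σ_{m=0}^{∞} q^{2·C(m,2)} q^{m(α+1)} / ((q;q)_m (q^{α+1};q)_m) )^{-1} = (q^{α+1};q)_∞. -/
/-- The q-Pochhammer symbol (a;q)ₘ = ∏_{i=0}^{m-1}(1 - a qⁱ). -/
noncomputable def qPoch (a q : ℝ) (n : ℕ) : ℝ := ∏ i ∈ Finset.range n, (1 - a * q ^ i)

/-- (a;q)_∞ = ∏_{m≥0}(1 - a q^m). -/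
noncomputable def qPochInf (a q : ℝ) : ℝ := ∏' m : ℕ, (1 - a * q ^ m)

section aux

variable {a q : ℝ} (hq : 0 < q) (hq1 : q < 1) (ha : 0 < a) (ha1 : a < 1)

lemma qPoch_succ (n : ℕ) : qPoch a q (n + 1) = qPoch a q n * (1 - a * q ^ n) :=
  Finset.prod_range_succ _ _

include hq hq1 ha ha1

lemma factor_pos (i : ℕ) : 0 < 1 - a * q ^ i := by
  have h1 : q ^ i ≤ 1 := pow_le_one₀ hq.le hq1.le
  nlinarith

lemma factor_le_one (i : ℕ) : 1 - a * q ^ i ≤ 1 := by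
  have : 0 < q ^ i := pow_pos hq i
  nlinarith

lemma qPoch_pos (n : ℕ) : 0 < qPoch a q n :=
  Finset.prod_pos fun i _ => factor_pos hq hq1 ha ha1 i

lemma qPoch_le_one (n : ℕ) : qPoch a q n ≤ 1 :=
  Finset.prod_le_one (fun i _ => (factor_pos hq hq1 ha ha1 i).le)
    (fun i _ => factor_le_one hq hq1 ha ha1 i)

lemma qPoch_anti {n N : ℕ} (h : n ≤ N) : qPoch a q N ≤ qPoch a q n := by
  obtain ⟨k, rfl⟩ := Nat.exists_eq_add_of_le h
  have h1 : (∏ i ∈ Finset.range k, (1 - a * q ^ (n + i))) ≤ 1 :=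
    Finset.prod_le_one (fun i _ => (factor_pos hq hq1 ha ha1 (n + i)).le)
      (fun i _ => factor_le_one hq hq1 ha ha1 (n + i))
  have h2 := qPoch_pos hq hq1 ha ha1 n
  unfold qPoch at h2 ⊢
  rw [Finset.prod_range_add]
  exact mul_le_of_le_one_right h2.le h1

lemma summable_log : Summable fun m : ℕ => Real.log (1 - a * q ^ m) := by
  have hgeo : Summable (fun m : ℕ => (a / (1 - a)) * q ^ m) :=
    (summable_geometric_of_lt_one hq.le hq1).mul_left _
  have hneg : Summable (fun m : ℕ => -Real.log (1 - a * q ^ m)) := by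
    apply Summable.of_nonneg_of_le _ _ hgeo
    · intro m
      simp only [neg_nonneg]
      exact Real.log_nonpos (factor_pos hq hq1 ha ha1 m).le (factor_le_one hq hq1 ha ha1 m)
    intro m
    have hpos := factor_pos hq hq1 ha ha1 m
    have h1 : -Real.log (1 - a * q ^ m) = Real.log (1 - a * q ^ m)⁻¹ := by
      rw [Real.log_inv]
    rw [h1]
    have h2 : Real.log (1 - a * q ^ m)⁻¹ ≤ (1 - a * q ^ m)⁻¹ - 1 :=
      Real.log_le_sub_one_of_pos (by positivity)
    have h3 : (1 - a * q ^ m)⁻¹ - 1 = a * q ^ m / (1 - a * q ^ m) := by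
      field_simp
      ring
    have hqm : q ^ m ≤ 1 := pow_le_one₀ hq.le hq1.le
    have h4 : a * q ^ m / (1 - a * q ^ m) ≤ a * q ^ m / (1 - a) := by
      apply div_le_div_of_nonneg_left (by positivity) (by linarith) (by nlinarith)
    calc Real.log (1 - a * q ^ m)⁻¹ ≤ a * q ^ m / (1 - a * q ^ m) := by rw [← h3]; exact h2
      _ ≤ a * q ^ m / (1 - a) := h4
      _ = (a / (1 - a)) * q ^ m := by ring
  exact summable_neg_iff.mp hneg

lemma hasProd_qPochInf : HasProd (fun m : ℕ => 1 - a * q ^ m) (qPochInf a q) := by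
  have := (Real.multipliable_of_summable_log (f := fun m : ℕ => 1 - a * q ^ m)
    (fun m => factor_pos hq hq1 ha ha1 m) (summable_log hq hq1 ha ha1)).hasProd
  exact this

lemma tendsto_qPoch :
    Filter.Tendsto (fun n => qPoch a q n) Filter.atTop (nhds (qPochInf a q)) :=
  (hasProd_qPochInf hq hq1 ha ha1).tendsto_prod_nat

lemma qPochInf_pos : 0 < qPochInf a q := by
  have := Real.rexp_tsum_eq_tprod (f := fun m : ℕ => 1 - a * q ^ m)
    (fun m => factor_pos hq hq1 ha ha1 m) (summable_log hq hq1 ha ha1)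
  beta_reduce at this
  rw [qPochInf, ← this]
  exact Real.exp_pos _

lemma qPochInf_le (n : ℕ) : qPochInf a q ≤ qPoch a q n := by
  apply le_of_tendsto (tendsto_qPoch hq hq1 ha ha1)
  filter_upwards [Filter.eventually_ge_atTop n] with N hN
  exact qPoch_anti hq hq1 ha ha1 hN

end aux


noncomputable def qC (q : ℝ) (N m : ℕ) : ℝ :=
  qPoch q q N / (qPoch q q m * qPoch q q (N - m))

noncomputable def qU (q b : ℝ) (m : ℕ) : ℝ := q ^ (m * (m - 1)) * b ^ m / qPoch b q m

section core

variable {q b : ℝ} (hq : 0 < q) (hq1 : q < 1) (hb : 0 < b) (hb1 : b < 1)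

include hq hq1 hb hb1

lemma qU_succ (m : ℕ) :
    qU q b (m + 1) = qU q b m * q ^ (2 * m) * b / (1 - b * q ^ m) := by
  have hfac := factor_pos hq hq1 hb hb1 m
  have hQ := qPoch_pos hq hq1 hb hb1 m
  have hexp : (m + 1) * ((m + 1) - 1) = m * (m - 1) + 2 * m := by
    rcases m with _ | k
    · rfl
    · simp only [Nat.succ_sub_one]
      ring
  rw [qU, qU, qPoch_succ, hexp, pow_add]
  field_simp
  ring

omit hb hb1 in
lemma qC_zero (N : ℕ) : qC q N 0 = 1 := by
  have hP := (qPoch_pos hq hq1 hq hq1 N).ne'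
  have h0 : qPoch q q 0 = 1 := Finset.prod_range_zero _
  rw [qC, Nat.sub_zero, h0, one_mul, div_self hP]

omit hb hb1 in
lemma qC_self (N : ℕ) : qC q N N = 1 := by
  have hP := (qPoch_pos hq hq1 hq hq1 N).ne'
  have h0 : qPoch q q 0 = 1 := Finset.prod_range_zero _
  rw [qC, Nat.sub_self, h0, mul_one, div_self hP]

omit hb hb1 in
lemma pascalB {N m : ℕ} (h : m < N) :
    qC q (N + 1) (m + 1) = q ^ (m + 1) * qC q N (m + 1) + qC q N m := by
  obtain ⟨k, rfl⟩ : ∃ k, N = m + k + 1 := ⟨N - m - 1, by omega⟩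
  have e1 : m + k + 1 + 1 - (m + 1) = k + 1 := by omega
  have e2 : m + k + 1 - (m + 1) = k := by omega
  have e3 : m + k + 1 - m = k + 1 := by omega
  have e4 : m + k + 1 + 1 = (m + k + 1) + 1 := rfl
  have e5 : k + 1 = k + 1 := rfl
  rw [qC, qC, qC, e1, e2, e3, e4,
    qPoch_succ (a := q) (q := q) (m + k + 1),
    qPoch_succ (a := q) (q := q) k, qPoch_succ (a := q) (q := q) m]
  have h1 := (qPoch_pos hq hq1 hq hq1 m).ne'
  have h2 := (qPoch_pos hq hq1 hq hq1 k).ne'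
  have h3 := (qPoch_pos hq hq1 hq hq1 (m + k + 1)).ne'
  have h4 := (factor_pos hq hq1 hq hq1 m).ne'
  have h5 := (factor_pos hq hq1 hq hq1 k).ne'
  have h6 := (factor_pos hq hq1 hq hq1 (m + k + 1)).ne'
  field_simp
  ring

omit hb hb1 in
lemma pascalA {N m : ℕ} (h : m < N) :
    qC q (N + 1) (m + 1) = qC q N (m + 1) + q ^ (N - m) * qC q N m := by
  obtain ⟨k, rfl⟩ : ∃ k, N = m + k + 1 := ⟨N - m - 1, by omega⟩
  have e1 : m + k + 1 + 1 - (m + 1) = k + 1 := by omega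
  have e2 : m + k + 1 - (m + 1) = k := by omega
  have e3 : m + k + 1 - m = k + 1 := by omega
  rw [qC, qC, qC, e1, e2, e3, show m + k + 1 + 1 = (m + k + 1) + 1 from rfl,
    qPoch_succ (a := q) (q := q) (m + k + 1),
    qPoch_succ (a := q) (q := q) k, qPoch_succ (a := q) (q := q) m]
  have h1 := (qPoch_pos hq hq1 hq hq1 m).ne'
  have h2 := (qPoch_pos hq hq1 hq hq1 k).ne'
  have h3 := (qPoch_pos hq hq1 hq hq1 (m + k + 1)).ne'
  have h4 := (factor_pos hq hq1 hq hq1 m).ne'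
  have h5 := (factor_pos hq hq1 hq hq1 k).ne'
  have h6 := (factor_pos hq hq1 hq hq1 (m + k + 1)).ne'
  field_simp
  ring

/-- The finite Durfee-square identity. -/
lemma finite_id (N : ℕ) :
    (∑ m ∈ Finset.range (N + 1), qC q N m * qU q b m) = (qPoch b q N)⁻¹ := by
  induction N with
  | zero => simp [qC, qU, qPoch]
  | succ N ih =>
    have hfacN := factor_pos hq hq1 hb hb1 N
    -- split the (N+2)-sum
    have hsplit : (∑ m ∈ Finset.range (N + 1 + 1), qC q (N + 1) m * qU q b m)
        = (∑ m ∈ Finset.range N, qC q (N + 1) (m + 1) * qU q b (m + 1))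
          + qU q b (N + 1) + qU q b 0 := by
      rw [Finset.sum_range_succ' (fun m => qC q (N + 1) m * qU q b m) (N + 1),
        Finset.sum_range_succ (fun m => qC q (N + 1) (m + 1) * qU q b (m + 1)) N,
        qC_self hq hq1, qC_zero hq hq1]
      ring
    -- representation A (Pascal B)
    have hA : (∑ m ∈ Finset.range (N + 1 + 1), qC q (N + 1) m * qU q b m)
        = (∑ m ∈ Finset.range (N + 1), q ^ m * (qC q N m * qU q b m))
          + (∑ m ∈ Finset.range (N + 1), qC q N m * qU q b (m + 1)) := by
      rw [hsplit,
        Finset.sum_range_succ' (fun m => q ^ m * (qC q N m * qU q b m)) N,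
        Finset.sum_range_succ (fun m => qC q N m * qU q b (m + 1)) N,
        qC_self hq hq1, qC_zero hq hq1]
      have e1 : (∑ m ∈ Finset.range N, qC q (N + 1) (m + 1) * qU q b (m + 1))
          = (∑ m ∈ Finset.range N, (q ^ (m + 1) * (qC q N (m + 1) * qU q b (m + 1))
              + qC q N m * qU q b (m + 1))) := by
        refine Finset.sum_congr rfl fun m hm => ?_
        rw [pascalB hq hq1 (Finset.mem_range.mp hm)]
        ring
      rw [e1, Finset.sum_add_distrib]
      simp only [pow_zero, one_mul]
      ring
    -- representation B (Pascal A)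
    have hB : (∑ m ∈ Finset.range (N + 1 + 1), qC q (N + 1) m * qU q b m)
        = (∑ m ∈ Finset.range (N + 1), qC q N m * qU q b m)
          + (∑ m ∈ Finset.range (N + 1), q ^ (N - m) * (qC q N m * qU q b (m + 1))) := by
      rw [hsplit,
        Finset.sum_range_succ' (fun m => qC q N m * qU q b m) N,
        Finset.sum_range_succ (fun m => q ^ (N - m) * (qC q N m * qU q b (m + 1))) N,
        qC_self hq hq1, qC_zero hq hq1]
      have e1 : (∑ m ∈ Finset.range N, qC q (N + 1) (m + 1) * qU q b (m + 1))
          = (∑ m ∈ Finset.range N, (qC q N (m + 1) * qU q b (m + 1)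
              + q ^ (N - m) * (qC q N m * qU q b (m + 1)))) := by
        refine Finset.sum_congr rfl fun m hm => ?_
        have hm' := Finset.mem_range.mp hm
        rw [pascalA hq hq1 hm']
        have : N - (m + 1) + 1 = N - m := by omega
        rw [← this, pow_succ]
        ring
      rw [e1, Finset.sum_add_distrib]
      simp only [Nat.sub_self, pow_zero, one_mul]
      ring
    -- pointwise relation between the two extra sums
    have hT : (∑ m ∈ Finset.range (N + 1), q ^ (N - m) * (qC q N m * qU q b (m + 1)))
        = b * q ^ N * ((∑ m ∈ Finset.range (N + 1), q ^ m * (qC q N m * qU q b m))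
          + (∑ m ∈ Finset.range (N + 1), qC q N m * qU q b (m + 1))) := by
      rw [← Finset.sum_add_distrib, Finset.mul_sum]
      refine Finset.sum_congr rfl fun m hm => ?_
      have hm' : m ≤ N := Nat.lt_succ_iff.mp (Finset.mem_range.mp hm)
      obtain ⟨k, rfl⟩ : ∃ k, N = m + k := ⟨N - m, by omega⟩
      have e2 : m + k - m = k := by omega
      rw [e2, qU_succ hq hq1 hb hb1 m]
      have h1 := (factor_pos hq hq1 hb hb1 m).ne'
      field_simp
      ring
    -- combine
    have hfinal : (∑ m ∈ Finset.range (N + 1 + 1), qC q (N + 1) m * qU q b m)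
        * (1 - b * q ^ N) = (qPoch b q N)⁻¹ := by
      rw [← ih]
      calc (∑ m ∈ Finset.range (N + 1 + 1), qC q (N + 1) m * qU q b m) * (1 - b * q ^ N)
          = (∑ m ∈ Finset.range (N + 1 + 1), qC q (N + 1) m * qU q b m)
            - b * q ^ N * ((∑ m ∈ Finset.range (N + 1), q ^ m * (qC q N m * qU q b m))
              + (∑ m ∈ Finset.range (N + 1), qC q N m * qU q b (m + 1))) := by
            rw [hA]
            ring
        _ = ∑ m ∈ Finset.range (N + 1), qC q N m * qU q b m := by
            rw [hB, hT]
            ring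
    have hQN := qPoch_pos hq hq1 hb hb1 N
    rw [qPoch_succ, mul_inv, ← hfinal, mul_assoc, mul_inv_cancel₀ hfacN.ne', mul_one]

lemma key_tsum :
    (∑' m : ℕ, q ^ (m * (m - 1)) * b ^ m / (qPoch q q m * qPoch b q m)) =
      (qPochInf b q)⁻¹ := by
  have hP : ∀ n, 0 < qPoch q q n := fun n => qPoch_pos hq hq1 hq hq1 n
  have hQ : ∀ n, 0 < qPoch b q n := fun n => qPoch_pos hq hq1 hb hb1 n
  have hPinf : 0 < qPochInf q q := qPochInf_pos hq hq1 hq hq1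
  have hQinf : 0 < qPochInf b q := qPochInf_pos hq hq1 hb hb1
  have htP := tendsto_qPoch hq hq1 hq hq1
  have htQ := tendsto_qPoch hq hq1 hb hb1
  set t : ℕ → ℝ := fun m => q ^ (m * (m - 1)) * b ^ m / (qPoch q q m * qPoch b q m) with ht
  have htnn : ∀ m, 0 ≤ t m := fun m => by
    have := (hP m).le; have := (hQ m).le
    positivity
  have hqCpos : ∀ N m, 0 < qC q N m := fun N m => by
    have := hP N; have := hP m; have := hP (N - m)
    rw [qC]; positivity
  have hqUnn : ∀ m, 0 ≤ qU q b m := fun m => by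
    have := (hQ m).le
    rw [qU]; positivity
  -- expressing the summand of the finite identity via t
  have hrepr : ∀ N m, qC q N m * qU q b m = t m * (qPoch q q N / qPoch q q (N - m)) := by
    intro N m
    rw [qC, qU, ht]
    field_simp [(hP N).ne', (hP m).ne', (hP (N - m)).ne', (hQ m).ne']
  -- upper bound for each term
  have hcu : ∀ N m, m ≤ N → qC q N m * qU q b m ≤ t m := by
    intro N m hm
    rw [hrepr N m]
    have h1 : qPoch q q N / qPoch q q (N - m) ≤ 1 := by
      rw [div_le_one (hP (N - m))]
      exact qPoch_anti hq hq1 hq hq1 (Nat.sub_le N m)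
    calc t m * (qPoch q q N / qPoch q q (N - m)) ≤ t m * 1 :=
          mul_le_mul_of_nonneg_left h1 (htnn m)
      _ = t m := mul_one _
  -- lower bound for each term
  have hlow : ∀ N m, qPoch q q N * t m ≤ qC q N m * qU q b m := by
    intro N m
    rw [hrepr N m]
    have h1 : qPoch q q N ≤ qPoch q q N / qPoch q q (N - m) := by
      rw [le_div_iff₀ (hP (N - m))]
      exact mul_le_of_le_one_right (hP N).le (qPoch_le_one hq hq1 hq hq1 (N - m))
    calc qPoch q q N * t m = t m * qPoch q q N := mul_comm _ _
      _ ≤ t m * (qPoch q q N / qPoch q q (N - m)) :=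
          mul_le_mul_of_nonneg_left h1 (htnn m)
  -- summability
  have hsummable : Summable t := by
    apply summable_of_sum_range_le htnn (c := (qPochInf b q)⁻¹ * (qPochInf q q)⁻¹)
    intro n
    have step1 : (∑ i ∈ Finset.range n, t i) ≤ ∑ i ∈ Finset.range (n + 1), t i := by
      apply Finset.sum_le_sum_of_subset_of_nonneg
      · exact Finset.range_subset_range.mpr (Nat.le_succ n)
      · intro i _ _; exact htnn i
    have step2 : qPoch q q n * (∑ i ∈ Finset.range (n + 1), t i) ≤ (qPoch b q n)⁻¹ := by
      rw [← finite_id hq hq1 hb hb1 n, Finset.mul_sum]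
      exact Finset.sum_le_sum fun m _ => hlow n m
    have step3 : (qPoch b q n)⁻¹ ≤ (qPochInf b q)⁻¹ :=
      inv_anti₀ hQinf (qPochInf_le hq hq1 hb hb1 n)
    have step4 : (∑ i ∈ Finset.range (n + 1), t i) ≤ (qPochInf b q)⁻¹ * (qPoch q q n)⁻¹ := by
      have h23 : qPoch q q n * (∑ i ∈ Finset.range (n + 1), t i) ≤ (qPochInf b q)⁻¹ :=
        le_trans step2 step3
      have := (le_div_iff₀' (hP n)).mpr h23
      rwa [div_eq_mul_inv] at this
    have step5 : (qPoch q q n)⁻¹ ≤ (qPochInf q q)⁻¹ :=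
      inv_anti₀ hPinf (qPochInf_le hq hq1 hq hq1 n)
    calc (∑ i ∈ Finset.range n, t i) ≤ ∑ i ∈ Finset.range (n + 1), t i := step1
      _ ≤ (qPochInf b q)⁻¹ * (qPoch q q n)⁻¹ := step4
      _ ≤ (qPochInf b q)⁻¹ * (qPochInf q q)⁻¹ := by
          apply mul_le_mul_of_nonneg_left step5 (by positivity)
  -- lower bound for the tsum
  have hge : (qPochInf b q)⁻¹ ≤ ∑' m, t m := by
    have hlim : Filter.Tendsto (fun N => (qPoch b q N)⁻¹) Filter.atTop
        (nhds (qPochInf b q)⁻¹) := htQ.inv₀ hQinf.ne'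
    apply le_of_tendsto hlim
    filter_upwards with N
    rw [← finite_id hq hq1 hb hb1 N]
    calc (∑ m ∈ Finset.range (N + 1), qC q N m * qU q b m)
        ≤ ∑ m ∈ Finset.range (N + 1), t m :=
          Finset.sum_le_sum fun m hm => hcu N m (Nat.lt_succ_iff.mp (Finset.mem_range.mp hm))
      _ ≤ ∑' m, t m := Summable.sum_le_tsum _ (fun i _ => htnn i) hsummable
  -- upper bound for the tsum
  have hle : (∑' m, t m) ≤ (qPochInf b q)⁻¹ := by
    apply Summable.tsum_le_of_sum_range_le hsummable
    intro n
    -- partial sum over range n is a limit of truncated finite-identity sums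
    have hlim : Filter.Tendsto (fun N => ∑ m ∈ Finset.range n, qC q N m * qU q b m)
        Filter.atTop (nhds (∑ m ∈ Finset.range n, t m)) := by
      apply tendsto_finset_sum
      intro m _
      have h1 : Filter.Tendsto (fun N => qPoch q q (N - m)) Filter.atTop
          (nhds (qPochInf q q)) := htP.comp (Filter.tendsto_sub_atTop_nat m)
      have h2 : Filter.Tendsto (fun N => qC q N m) Filter.atTop
          (nhds (qPochInf q q / (qPoch q q m * qPochInf q q))) := by
        simp only [qC]
        exact htP.div (tendsto_const_nhds.mul h1) (mul_pos (hP m) hPinf).ne'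
      have h3 : qPochInf q q / (qPoch q q m * qPochInf q q) * qU q b m = t m := by
        rw [qU, ht]
        field_simp [(hP m).ne', (hQ m).ne', hPinf.ne']
      have := h2.mul_const (qU q b m)
      rwa [h3] at this
    apply le_of_tendsto hlim
    filter_upwards [Filter.eventually_ge_atTop n] with N hN
    calc (∑ m ∈ Finset.range n, qC q N m * qU q b m)
        ≤ ∑ m ∈ Finset.range (N + 1), qC q N m * qU q b m := by
          apply Finset.sum_le_sum_of_subset_of_nonneg
          · exact Finset.range_subset_range.mpr (by omega)
          · intro i _ _
            exact mul_nonneg (hqCpos N i).le (hqUnn i)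
      _ = (qPoch b q N)⁻¹ := finite_id hq hq1 hb hb1 N
      _ ≤ (qPochInf b q)⁻¹ :=
          inv_anti₀ hQinf (qPochInf_le hq hq1 hb hb1 N)
  exact le_antisymm hle hge

end core


/-- Cauchy's formula specialized at b = q^{α+1} (α > -1):
Σ_{m≥0} q^{m(m-1)} q^{m(α+1)}/((q;q)_m (q^{α+1};q)_m) = 1/(q^{α+1};q)_∞;
equivalently the inverse of this sum equals (q^{α+1};q)_∞. -/
theorem stmt_18 (q α : ℝ) (hq : 0 < q) (hq1 : q < 1) (hα : -1 < α) :
    (∑' m : ℕ,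
        q ^ (m*(m-1)) * q ^ ((m:ℝ) * (α+1)) / (qPoch q q m * qPoch (q ^ (α+1)) q m)) =
      (qPochInf (q ^ (α+1)) q)⁻¹
    ∧ (∑' m : ℕ,
        q ^ (2 * (m.choose 2)) * q ^ ((m:ℝ) * (α+1)) /
          (qPoch q q m * qPoch (q ^ (α+1)) q m))⁻¹ =
      qPochInf (q ^ (α+1)) q := by
  set b : ℝ := q ^ (α + 1) with hbdef
  have hb : 0 < b := Real.rpow_pos_of_pos hq _
  have hb1 : b < 1 := Real.rpow_lt_one hq.le hq1 (by linarith)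
  have hexp : ∀ m : ℕ, q ^ ((m : ℝ) * (α + 1)) = b ^ m := by
    intro m
    rw [mul_comm, Real.rpow_mul hq.le, Real.rpow_natCast]
  have hch : ∀ m : ℕ, 2 * (m.choose 2) = m * (m - 1) := by
    intro m
    rw [Nat.choose_two_right]
    apply Nat.mul_div_cancel'
    rcases m with _ | k
    · simp
    · simpa [Nat.succ_sub_one, mul_comm] using (Nat.even_mul_succ_self k).two_dvd
  have h1 : (∑' m : ℕ,
      q ^ (m*(m-1)) * q ^ ((m:ℝ) * (α+1)) / (qPoch q q m * qPoch b q m)) =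
      (qPochInf b q)⁻¹ := by
    rw [show (fun m : ℕ => q ^ (m*(m-1)) * q ^ ((m:ℝ) * (α+1)) / (qPoch q q m * qPoch b q m))
        = fun m : ℕ => q ^ (m*(m-1)) * b ^ m / (qPoch q q m * qPoch b q m) from
        funext fun m => by rw [hexp m]]
    exact key_tsum hq hq1 hb hb1
  refine ⟨h1, ?_⟩
  have h2 : (∑' m : ℕ,
      q ^ (2 * (m.choose 2)) * q ^ ((m:ℝ) * (α+1)) / (qPoch q q m * qPoch b q m)) =
      (qPochInf b q)⁻¹ := by
    rw [show (fun m : ℕ => q ^ (2 * (m.choose 2)) * q ^ ((m:ℝ) * (α+1)) /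
        (qPoch q q m * qPoch b q m))
        = fun m : ℕ => q ^ (m*(m-1)) * b ^ m / (qPoch q q m * qPoch b q m) from
        funext fun m => by rw [hexp m, hch m]]
    exact key_tsum hq hq1 hb hb1
  rw [h2, inv_inv]
end
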